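/- (Final-time supersolution inequality, interior) Let w(z) = 1/p + Mλ - h(z-θ)/ν with ν > 0, θ ∈ ℝ, M ≥ θ + 1, and h(δ) = (3/2)δ²λ^{2/3} - δ⁴/ν² + (3/2)Bδ²λ^{4/3}. Then for all sufficiently small λ > 0 and all z with |z - θ| ≤ νλ^{1/3} and 0 ≤ z < 1/λ, one has w(z) > (1-λz)^p / p. -/

import Mathlib

open Real Set

/-- Tangent-line bound for the concave function `x ↦ x^p/p`, `p < 1`, `p ≠ 0`. -/
lemma rpow_div_le_tangent (p : ℝ) (hp1 : p < 1) (hp0 : p ≠ 0) {x : ℝ} (hx : 0 < x) :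
    x ^ p / p ≤ 1 / p + (x - 1) := by
  rcases lt_or_gt_of_ne hp0 with hneg | hpos
  · -- p < 0 : first show `1 + p*(x-1) ≤ x^p`
    have key : 1 + p * (x - 1) ≤ x ^ p := by
      rcases le_or_gt (1 + p * (x - 1)) 0 with h0 | h0
      · exact h0.trans (Real.rpow_pos_of_pos hx p).le
      · set t : ℝ := 1 / (1 - p) with ht_def
        have h1p : (0:ℝ) < 1 - p := by linarith
        have ht : 0 < t := by positivity
        have hw2 : 0 ≤ -p * t := by
          apply mul_nonneg (by linarith) ht.le
        have hsum : t + -p * t = 1 := by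
          calc t + -p * t = (1 - p) * t := by ring
          _ = 1 := by rw [ht_def]; exact mul_one_div_cancel h1p.ne'
        have hgm := Real.geom_mean_le_arith_mean2_weighted ht.le hw2 h0.le hx.le hsum
        have hrhs : t * (1 + p * (x - 1)) + -p * t * x = 1 := by
          rw [ht_def]; field_simp; ring
        rw [hrhs] at hgm
        -- hgm : (1 + p*(x-1)) ^ t * x ^ (-p * t) ≤ 1
        have hxp : x ^ (-p * t) = (x ^ p) ^ (-t) := by
          rw [← Real.rpow_mul hx.le]
          ring_nf
        have hxpt : (0:ℝ) < (x ^ p) ^ t := Real.rpow_pos_of_pos (Real.rpow_pos_of_pos hx p) t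
        have hineq : (1 + p * (x - 1)) ^ t ≤ (x ^ p) ^ t := by
          have hinv : (x ^ p) ^ (-t) = ((x ^ p) ^ t)⁻¹ :=
            Real.rpow_neg (Real.rpow_pos_of_pos hx p).le t
          rw [hxp, hinv] at hgm
          rw [← div_le_one hxpt, div_eq_mul_inv]
          exact hgm
        -- raise to power 1/t
        have := Real.rpow_le_rpow (Real.rpow_nonneg h0.le t) hineq (le_of_lt (by positivity : (0:ℝ) < 1/t))
        rwa [← Real.rpow_mul h0.le, ← Real.rpow_mul (Real.rpow_pos_of_pos hx p).le,
          mul_one_div, div_self ht.ne', Real.rpow_one, Real.rpow_one] at this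
    rw [div_le_iff_of_neg hneg]
    have : (1 / p + (x - 1)) * p = 1 + p * (x - 1) := by field_simp
    linarith
  · -- 0 < p < 1 : Bernoulli
    have hs : (-1:ℝ) ≤ x - 1 := by linarith
    have hb := rpow_one_add_le_one_add_mul_self hs hpos.le hp1.le
    rw [add_sub_cancel] at hb
    rw [div_le_iff₀ hpos]
    have : (1 / p + (x - 1)) * p = 1 + p * (x - 1) := by field_simp
    linarith

set_option maxHeartbeats 1000000 in
/-- Final-time supersolution inequality in the interior: for
`w(z) = 1/p + Mλ - h(z-θ)/ν` with `M ≥ θ + 1`, and all small `λ > 0`,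
`w(z) > (1-λz)^p / p` whenever `|z-θ| ≤ νλ^{1/3}`, `0 ≤ z < 1/λ`. -/
theorem stmt11 (p nu B th M : ℝ) (hp1 : p < 1) (hp0 : p ≠ 0)
    (hnu : 0 < nu) (hB : 0 < B) (hM : M ≥ th + 1) :
    ∃ lam0 > 0, ∀ lam ∈ Ioo (0:ℝ) lam0, ∀ z : ℝ,
      |z - th| ≤ nu * lam ^ ((1:ℝ)/3) → 0 ≤ z → z < 1 / lam →
      1 / p + M * lam
          - ((3/2) * (z - th) ^ 2 * lam ^ ((2:ℝ)/3) - (z - th) ^ 4 / nu ^ 2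
              + (3/2) * B * (z - th) ^ 2 * lam ^ ((4:ℝ)/3)) / nu
        > (1 - lam * z) ^ p / p := by
  set c : ℝ := min (2 / (3 * nu * (1 + B))) (min (if th < 0 then -th / (2 * nu) else 1) 1) with hc_def
  have hc : 0 < c := by
    apply lt_min (by positivity)
    apply lt_min _ one_pos
    split_ifs with h
    · exact div_pos (by linarith) (by positivity)
    · exact one_pos
  refine ⟨min 1 (c ^ 3), lt_min one_pos (by positivity), ?_⟩
  rintro lam ⟨hlam0, hlam1⟩ z hzth hz0 hzlam
  set t : ℝ := lam ^ ((1:ℝ)/3) with ht_def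
  have ht0 : 0 < t := Real.rpow_pos_of_pos hlam0 _
  have htc : t < c := by
    have h1 : lam < c ^ 3 := lt_of_lt_of_le hlam1 (min_le_right _ _)
    have h2 : t < (c ^ 3) ^ ((1:ℝ)/3) :=
      Real.rpow_lt_rpow hlam0.le h1 (by norm_num)
    have h3 : (c ^ 3) ^ ((1:ℝ)/3) = c := by
      rw [← Real.rpow_natCast c 3, ← Real.rpow_mul hc.le]
      norm_num
    rwa [h3] at h2
  have hlam_t : lam = t ^ 3 := by
    rw [ht_def, ← Real.rpow_natCast (lam ^ ((1:ℝ)/3)) 3, ← Real.rpow_mul hlam0.le]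
    norm_num
  have h23 : lam ^ ((2:ℝ)/3) = t ^ 2 := by
    rw [ht_def, ← Real.rpow_natCast (lam ^ ((1:ℝ)/3)) 2, ← Real.rpow_mul hlam0.le]
    norm_num
  have h43 : lam ^ ((4:ℝ)/3) = t ^ 4 := by
    rw [ht_def, ← Real.rpow_natCast (lam ^ ((1:ℝ)/3)) 4, ← Real.rpow_mul hlam0.le]
    norm_num
  -- θ must be nonnegative, otherwise the hypotheses are contradictory
  have hth : 0 ≤ th := by
    by_contra hthneg
    push_neg at hthneg
    have hcth : c ≤ -th / (2 * nu) := by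
      refine le_trans (min_le_right _ _) (le_trans (min_le_left _ _) ?_)
      rw [if_pos (by linarith)]
    have : z ≤ th + nu * t := by
      have := abs_le.mp hzth
      linarith [this.2]
    have hnt : nu * t < -th := by
      have : nu * t < nu * c := by nlinarith
      have h2 : nu * c ≤ -th / 2 := by
        calc nu * c ≤ nu * (-th / (2 * nu)) := by nlinarith
        _ = -th / 2 := by field_simp
      linarith
    linarith
  have hM1 : 1 ≤ M := by linarith
  have ht1 : t < 1 := lt_of_lt_of_le htc (le_trans (min_le_right _ _) (min_le_right _ _))
  have htB : t < 2 / (3 * nu * (1 + B)) := lt_of_lt_of_le htc (min_le_left _ _)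
  have htB' : (3/2) * nu * t * (1 + B) < 1 := by
    rw [lt_div_iff₀ (by positivity)] at htB
    nlinarith
  clear_value t
  clear_value c
  set d : ℝ := z - th with hd_def
  have hd2 : d ^ 2 ≤ nu ^ 2 * t ^ 2 := by
    have h := abs_le.mp hzth
    nlinarith [h.1, h.2]
  have hd4 : (0:ℝ) ≤ d ^ 4 / nu ^ 2 := by positivity
  clear_value d
  -- bound h/nu
  have hh : ((3/2) * d ^ 2 * t ^ 2 - d ^ 4 / nu ^ 2 + (3/2) * B * d ^ 2 * t ^ 4) / nu
      < t ^ 3 := by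
    rw [div_lt_iff₀ hnu]
    have ht2 : t ^ 2 ≤ 1 := by nlinarith
    have hd2' : d ^ 2 ≤ nu ^ 2 := by nlinarith [sq_nonneg nu]
    have e1 : (3/2) * d ^ 2 * t ^ 2 ≤ (3/2) * nu ^ 2 * t ^ 4 := by
      nlinarith [mul_le_mul_of_nonneg_right hd2 (sq_nonneg t)]
    have e2 : (3/2) * B * d ^ 2 * t ^ 4 ≤ (3/2) * B * nu ^ 2 * t ^ 4 := by
      nlinarith [mul_nonneg (mul_nonneg hB.le (sub_nonneg.2 hd2')) (pow_nonneg ht0.le 4)]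
    have e3 : (3/2) * nu ^ 2 * t ^ 4 * (1 + B) < t ^ 3 * nu := by
      nlinarith [mul_lt_mul_of_pos_left htB' (mul_pos (pow_pos ht0 3) hnu)]
    nlinarith [e1, e2, e3, hd4]
  -- the tangent-line bound
  have hx : 0 < 1 - lam * z := by
    rw [lt_div_iff₀ hlam0] at hzlam
    linarith [mul_comm z lam]
  have htan := rpow_div_le_tangent p hp1 hp0 hx
  have hfin : 1 / p - lam * z < 1 / p + M * lam
      - ((3/2) * d ^ 2 * t ^ 2 - d ^ 4 / nu ^ 2 + (3/2) * B * d ^ 2 * t ^ 4) / nu := by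
    have hlz : t ^ 3 ≤ M * lam + lam * z := by
      rw [hlam_t]; nlinarith [pow_pos ht0 3]
    linarith [hh, hlz]
  calc (1 - lam * z) ^ p / p ≤ 1 / p + ((1 - lam * z) - 1) := htan
    _ = 1 / p - lam * z := by ring
    _ < _ := by rw [h23, h43]; exact hfin
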